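/- arXiv:2107.03597 — 5 statements merged into one kernel-verified Lean document; each statement's English description precedes it below -/
import Mathlib

section
/- Let G be a maximal ancestral graph (MAG) and γ ≥ 1 an integer. Two nodes i and j are non-adjacent in G if and only if there exists a set S contained in the vertex set of the γ-local graph G_γ(i,j) that m-separates i and j within G_γ(i,j). -/
universe u

/-- A mixed graph with directed, bidirected and undirected edges. -/
structure MixedGraph (V : Type u) where
  dir : V → V → Prop
  bidir : V → V → Prop
  undir : V → V → Prop
  bidir_symm : ∀ a b, bidir a b → bidir b a
  undir_symm : ∀ a b, undir a b → undir b a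

namespace MixedGraph

variable {V : Type u} (G : MixedGraph V)

/-- Adjacency in a mixed graph. -/
def Adj (a b : V) : Prop :=
  G.dir a b ∨ G.dir b a ∨ G.bidir a b ∨ G.undir a b

/-- The edge between `a` and `b` has an arrowhead at `b`. -/
def ArrowInto (a b : V) : Prop := G.dir a b ∨ G.bidir a b

/-- `b` is a descendant of `a` (equivalently `a` is an ancestor of `b`),
allowing trivial directed paths. -/
def Anc (a b : V) : Prop := Relation.ReflTransGen G.dir a b

/-- `b` is a collider on the consecutive triple `(a, b, c)`. -/
def Collider (a b c : V) : Prop := G.ArrowInto a b ∧ G.ArrowInto c b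

/-- `π` is a path from `i` to `j`: a list of distinct vertices with consecutive
vertices adjacent, starting at `i` and ending at `j`. -/
def IsPathBetween (i j : V) (π : List V) : Prop :=
  π.Nodup ∧ π.Chain' G.Adj ∧ π.head? = some i ∧ π.getLast? = some j

/-- A set `S` blocks a path `π`: some non-collider of `π` is in `S`, or some
collider of `π` has no descendant (including itself) in `S`. -/
def Blocks (S : Set V) (π : List V) : Prop :=
  ∃ a b c, [a, b, c] <:+: π ∧
    ((¬ G.Collider a b c ∧ b ∈ S) ∨
     (G.Collider a b c ∧ ∀ d, G.Anc b d → d ∉ S))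

/-- `S` m-separates `i` and `j`: every path between them is blocked by `S`. -/
def MSep (i j : V) (S : Set V) : Prop :=
  ∀ π, G.IsPathBetween i j π → G.Blocks S π

/-- Ancestral graph: no directed cycles, no almost directed cycles, and no
arrowhead at an endpoint of an undirected edge. -/
def IsAncestral : Prop :=
  (∀ a b, G.dir a b → ¬ G.Anc b a) ∧
  (∀ a b, G.bidir a b → ¬ G.Anc a b) ∧
  (∀ a b, G.undir a b → ∀ c, ¬ G.ArrowInto c b)

/-- A maximal ancestral graph (MAG). -/
def IsMAG : Prop :=
  G.IsAncestral ∧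
  ∀ i j : V, i ≠ j → ¬ G.Adj i j →
    ∃ S : Set V, S ⊆ {v | v ≠ i ∧ v ≠ j} ∧ G.MSep i j S

/-- Induced subgraph on a vertex set `A` (keeping the ambient vertex type). -/
def induce (A : Set V) : MixedGraph V where
  dir a b := a ∈ A ∧ b ∈ A ∧ G.dir a b
  bidir a b := a ∈ A ∧ b ∈ A ∧ G.bidir a b
  undir a b := a ∈ A ∧ b ∈ A ∧ G.undir a b
  bidir_symm := fun a b ⟨ha, hb, h⟩ => ⟨hb, ha, G.bidir_symm _ _ h⟩
  undir_symm := fun a b ⟨ha, hb, h⟩ => ⟨hb, ha, G.undir_symm _ _ h⟩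

/-- `V_γ(i,j)`: vertices lying on some path between `i` and `j` of length
(number of edges) at most `γ`. -/
def Vγ (γ : ℕ) (i j : V) : Set V :=
  {v | ∃ π, G.IsPathBetween i j π ∧ π.length ≤ γ + 1 ∧ v ∈ π}

/-- The γ-local graph `G_γ(i,j)`: the subgraph induced by `V_γ(i,j)`. -/
def localGraph (γ : ℕ) (i j : V) : MixedGraph V :=
  G.induce (G.Vγ γ i j)

/-- A γ-local-graph separator of `(i,j)`: a subset of `V_γ(i,j) \ {i,j}`
m-separating `i` and `j` in the γ-local graph. -/
def IsLocalSep (γ : ℕ) (i j : V) (S : Set V) : Prop :=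
  S ⊆ G.Vγ γ i j \ {i, j} ∧ (G.localGraph γ i j).MSep i j S

/-- The (η,γ)-local path property: between any two non-adjacent nodes there
are at most η paths of length at most γ. -/
def LocalPathProp (η γ : ℕ) : Prop :=
  ∀ i j : V, i ≠ j → ¬ G.Adj i j →
    {π : List V | G.IsPathBetween i j π ∧ π.length ≤ γ + 1}.ncard ≤ η

/-- The parents of a vertex. -/
def pa (v : V) : Set V := {u | G.dir u v}

/-- All non-endpoint vertices of `π` are colliders on `π`. -/
def ColliderPathList (π : List V) : Prop :=
  ∀ a b c, [a, b, c] <:+: π → G.Collider a b c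

end MixedGraph

/-- The mixed graph of a directed graph. -/
def MixedGraph.ofDir {V : Type u} (E : V → V → Prop) : MixedGraph V where
  dir := E
  bidir _ _ := False
  undir _ _ := False
  bidir_symm := fun _ _ h => h.elim
  undir_symm := fun _ _ h => h.elim

/-- A directed graph is acyclic. -/
def Acyclic {V : Type u} (E : V → V → Prop) : Prop :=
  ∀ v, ¬ Relation.TransGen E v v

namespace MixedGraph

variable {V : Type u} {G : MixedGraph V}

lemma induce_adj {A : Set V} {a b : V} (h : (G.induce A).Adj a b) :
    a ∈ A ∧ b ∈ A ∧ G.Adj a b := by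
  rcases h with ⟨ha, hb, h⟩ | ⟨hb, ha, h⟩ | ⟨ha, hb, h⟩ | ⟨ha, hb, h⟩ <;>
    exact ⟨ha, hb, by unfold Adj; tauto⟩

lemma induce_arrowInto {A : Set V} {a b : V} (h : (G.induce A).ArrowInto a b) :
    G.ArrowInto a b := by
  rcases h with ⟨_, _, h⟩ | ⟨_, _, h⟩
  · exact Or.inl h
  · exact Or.inr h

lemma arrowInto_induce {A : Set V} {a b : V} (ha : a ∈ A) (hb : b ∈ A)
    (h : G.ArrowInto a b) : (G.induce A).ArrowInto a b := by
  rcases h with h | h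
  · exact Or.inl ⟨ha, hb, h⟩
  · exact Or.inr ⟨ha, hb, h⟩

lemma induce_collider {A : Set V} {a b c : V} (h : (G.induce A).Collider a b c) :
    G.Collider a b c :=
  ⟨induce_arrowInto h.1, induce_arrowInto h.2⟩

lemma induce_anc {A : Set V} {a b : V} (h : (G.induce A).Anc a b) : G.Anc a b :=
  Relation.ReflTransGen.mono (fun _ _ (hxy : (G.induce A).dir _ _) => hxy.2.2) _ _ h

lemma isPathBetween_of_induce {A : Set V} {i j : V} {π : List V}
    (h : (G.induce A).IsPathBetween i j π) : G.IsPathBetween i j π :=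
  ⟨h.1, h.2.1.imp (fun {_ _} h => (induce_adj h).2.2), h.2.2.1, h.2.2.2⟩

lemma middle_ne_head {π : List V} {a b c i : V} (hn : π.Nodup)
    (hh : π.head? = some i) (hinf : [a, b, c] <:+: π) : b ≠ i := by
  obtain ⟨s, t, rfl⟩ := hinf
  cases s with
  | nil =>
    simp only [List.nil_append, List.cons_append, List.head?_cons,
      Option.some.injEq] at hh
    subst hh
    intro hbi
    subst hbi
    simp at hn
  | cons x s' =>
    simp only [List.cons_append, List.head?_cons, Option.some.injEq] at hh
    subst hh
    intro hbi
    subst hbi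
    simp at hn

lemma middle_ne_last {π : List V} {a b c j : V} (hn : π.Nodup)
    (hl : π.getLast? = some j) (hinf : [a, b, c] <:+: π) : b ≠ j := by
  have hn' : π.reverse.Nodup := List.nodup_reverse.2 hn
  have hh' : π.reverse.head? = some j := by rwa [List.head?_reverse]
  have hinf' : [c, b, a] <:+: π.reverse := by
    have : ([a, b, c] : List V).reverse <:+: π.reverse := List.reverse_infix.2 hinf
    simpa using this
  exact middle_ne_head hn' hh' hinf'

end MixedGraph

/-- In a MAG, two nodes are non-adjacent iff there exists a
γ-local-graph separator for them. -/
theorem stmt0 {V : Type u} (G : MixedGraph V) (hG : G.IsMAG) (γ : ℕ) (hγ : 1 ≤ γ)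
    (i j : V) (hij : i ≠ j) :
    ¬ G.Adj i j ↔ ∃ S : Set V, G.IsLocalSep γ i j S := by
  constructor
  · intro hnadj
    obtain ⟨S', hS'sub, hS'sep⟩ := hG.2 i j hij hnadj
    refine ⟨S' ∩ (G.Vγ γ i j \ {i, j}), Set.inter_subset_right, ?_⟩
    intro π hπ
    have hπG : G.IsPathBetween i j π := MixedGraph.isPathBetween_of_induce hπ
    obtain ⟨a, b, c, hinf, hcase⟩ := hS'sep π hπG
    have hch : ([a, b, c] : List V).Chain' (G.localGraph γ i j).Adj :=
      hπ.2.1.infix hinf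
    have hab : (G.localGraph γ i j).Adj a b := by
      simpa using hch.rel_head
    have hbc : (G.localGraph γ i j).Adj b c := by
      have := hch.tail
      simpa using this.rel_head
    have haV : a ∈ G.Vγ γ i j := (MixedGraph.induce_adj hab).1
    have hbV : b ∈ G.Vγ γ i j := (MixedGraph.induce_adj hab).2.1
    have hcV : c ∈ G.Vγ γ i j := (MixedGraph.induce_adj hbc).2.1
    have hbi : b ≠ i := MixedGraph.middle_ne_head hπ.1 hπ.2.2.1 hinf
    have hbj : b ≠ j := MixedGraph.middle_ne_last hπ.1 hπ.2.2.2 hinf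
    refine ⟨a, b, c, hinf, ?_⟩
    rcases hcase with ⟨hnc, hbS'⟩ | ⟨hc, hd⟩
    · exact Or.inl ⟨fun hcl => hnc (MixedGraph.induce_collider hcl),
        ⟨hbS', hbV, by simp [hbi, hbj]⟩⟩
    · refine Or.inr ⟨⟨MixedGraph.arrowInto_induce haV hbV hc.1,
        MixedGraph.arrowInto_induce hcV hbV hc.2⟩, ?_⟩
      intro d hd' hdS
      exact hd d (MixedGraph.induce_anc hd') hdS.1
  · rintro ⟨S, hSsub, hSsep⟩ hadj
    have hpath : G.IsPathBetween i j [i, j] := by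
      refine ⟨by simp [hij], ?_, rfl, rfl⟩
      exact List.isChain_pair.2 hadj
    have hlen : ([i, j] : List V).length ≤ γ + 1 := by simp; omega
    have hiV : i ∈ G.Vγ γ i j := ⟨[i, j], hpath, hlen, by simp⟩
    have hjV : j ∈ G.Vγ γ i j := ⟨[i, j], hpath, hlen, by simp⟩
    have hladj : (G.localGraph γ i j).Adj i j := by
      rcases hadj with h | h | h | h
      · exact Or.inl ⟨hiV, hjV, h⟩
      · exact Or.inr (Or.inl ⟨hjV, hiV, h⟩)
      · exact Or.inr (Or.inr (Or.inl ⟨hiV, hjV, h⟩))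
      · exact Or.inr (Or.inr (Or.inr ⟨hiV, hjV, h⟩))
    have hlpath : (G.localGraph γ i j).IsPathBetween i j [i, j] := by
      refine ⟨by simp [hij], ?_, rfl, rfl⟩
      exact List.isChain_pair.2 hladj
    obtain ⟨a, b, c, hinf, _⟩ := hSsep [i, j] hlpath
    have := hinf.sublist.length_le
    simp at this
end

section
/- If S is an m-separator of two non-adjacent nodes i,j in a MAG G, then S ∩ V_γ(i,j) m-separates i and j in the γ-local graph G_γ(i,j). -/
universe u

/-- If S m-separates non-adjacent i,j in a MAG G, then S ∩ V_γ(i,j)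
m-separates i and j in the γ-local graph. -/
theorem stmt1 {V : Type u} (G : MixedGraph V) (hG : G.IsMAG) (γ : ℕ) (i j : V)
    (hij : i ≠ j) (hadj : ¬ G.Adj i j) (S : Set V) (hiS : i ∉ S) (hjS : j ∉ S)
    (hsep : G.MSep i j S) :
    (G.localGraph γ i j).MSep i j (S ∩ G.Vγ γ i j) := by
  intro π hπ
  obtain ⟨hnd, hch, hhd, hlast⟩ := hπ
  -- π is a path in G
  have hchG : π.Chain' G.Adj := by
    refine hch.imp ?_
    rintro a b (h | h | h | h)
    · exact Or.inl h.2.2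
    · exact Or.inr (Or.inl h.2.2)
    · exact Or.inr (Or.inr (Or.inl h.2.2))
    · exact Or.inr (Or.inr (Or.inr h.2.2))
  obtain ⟨a, b, c, hinf, hcase⟩ := hsep π ⟨hnd, hchG, hhd, hlast⟩
  -- local adjacencies on the triple
  have hch3 : List.Chain' (G.localGraph γ i j).Adj [a, b, c] := hch.infix hinf
  have hab : (G.localGraph γ i j).Adj a b := (List.isChain_cons_cons.mp hch3).1
  have hbc : (G.localGraph γ i j).Adj b c :=
    (List.isChain_cons_cons.mp (List.isChain_cons_cons.mp hch3).2).1
  have memA : ∀ x y : V, (G.localGraph γ i j).Adj x y →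
      x ∈ G.Vγ γ i j ∧ y ∈ G.Vγ γ i j := by
    rintro x y (h | h | h | h)
    exacts [⟨h.1, h.2.1⟩, ⟨h.2.1, h.1⟩, ⟨h.1, h.2.1⟩, ⟨h.1, h.2.1⟩]
  have haA := (memA _ _ hab).1
  have hbA := (memA _ _ hab).2
  have hcA := (memA _ _ hbc).2
  -- collider equivalence on the triple
  have harr : ∀ x y : V, x ∈ G.Vγ γ i j → y ∈ G.Vγ γ i j →
      ((G.localGraph γ i j).ArrowInto x y ↔ G.ArrowInto x y) := by
    intro x y hx hy
    constructor
    · rintro (h | h)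
      · exact Or.inl h.2.2
      · exact Or.inr h.2.2
    · rintro (h | h)
      · exact Or.inl ⟨hx, hy, h⟩
      · exact Or.inr ⟨hx, hy, h⟩
  have hcoll : (G.localGraph γ i j).Collider a b c ↔ G.Collider a b c := by
    unfold MixedGraph.Collider
    rw [harr a b haA hbA, harr c b hcA hbA]
  refine ⟨a, b, c, hinf, ?_⟩
  rcases hcase with ⟨hnc, hbS⟩ | ⟨hc, hdesc⟩
  · exact Or.inl ⟨fun h => hnc (hcoll.mp h), ⟨hbS, hbA⟩⟩
  · refine Or.inr ⟨hcoll.mpr hc, fun d hd hdS => ?_⟩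
    have : G.Anc b d := by
      refine Relation.ReflTransGen.mono ?_ _ _ hd
      rintro x y h
      exact h.2.2
    exact hdesc d this hdS.1
end

section
/- Let G be a DAG whose skeleton satisfies the (η,γ)-local path property (between any two non-adjacent nodes there are at most η paths of length at most γ). Then for every pair of non-adjacent nodes i,j there exists a γ-local-graph separator of (i,j) of size at most η; i.e., L(G,γ) ≤ η. -/
universe u

namespace MixedGraph

variable {V : Type u}

/-- Reversing a path. -/
lemma isPathBetween_reverse (G : MixedGraph V) {i j : V} {π : List V}
    (h : G.IsPathBetween i j π) : G.IsPathBetween j i π.reverse := by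
  obtain ⟨hnd, hch, hhd, hlt⟩ := h
  refine ⟨List.nodup_reverse.mpr hnd, ?_, ?_, ?_⟩
  · change List.IsChain _ π.reverse
    rw [List.isChain_reverse]
    exact hch.imp fun a b hab => by
      rcases hab with h | h | h | h
      · exact Or.inr (Or.inl h)
      · exact Or.inl h
      · exact Or.inr (Or.inr (Or.inl (G.bidir_symm _ _ h)))
      · exact Or.inr (Or.inr (Or.inr (G.undir_symm _ _ h)))
  · rw [List.head?_reverse]; exact hlt
  · rw [List.getLast?_reverse]; exact hhd

lemma collider_comm (G : MixedGraph V) {a b c : V} (h : G.Collider a b c) :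
    G.Collider c b a := ⟨h.2, h.1⟩

/-- m-separation is symmetric in the two endpoints. -/
lemma msep_symm (G : MixedGraph V) {i j : V} {S : Set V}
    (h : G.MSep j i S) : G.MSep i j S := by
  intro π hπ
  obtain ⟨a, b, c, hinf, hblk⟩ := h π.reverse (G.isPathBetween_reverse hπ)
  refine ⟨c, b, a, ?_, ?_⟩
  · have := hinf.reverse
    simpa using this
  · rcases hblk with ⟨hnc, hb⟩ | ⟨hc, hb⟩
    · exact Or.inl ⟨fun hc => hnc (G.collider_comm hc), hb⟩
    · exact Or.inr ⟨G.collider_comm hc, hb⟩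

/-- Auxiliary: walking forward along directed edges from a descendant of `i`,
if the path ends at `j` but `j` is not a descendant of `i`, the path must
contain a collider all of whose descendants avoid the parents of `i`. -/
lemma find_collider (H : MixedGraph V)
    (hb : ∀ a b, ¬ H.bidir a b) (hu : ∀ a b, ¬ H.undir a b)
    (hac : ∀ v, ¬ Relation.TransGen H.dir v v)
    {i j : V} (hnanc : ¬ H.Anc i j) :
    ∀ (l : List V) (a b : V), H.Anc i a → H.dir a b →
      List.Chain' H.Adj (a :: b :: l) → (a :: b :: l).getLast? = some j →
      ∃ x y z, [x, y, z] <:+: (a :: b :: l) ∧ H.Collider x y z ∧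
        ∀ d, H.Anc y d → ¬ H.dir d i := by
  intro l
  induction l with
  | nil =>
    intro a b hia hab _ hlast
    exfalso
    simp only [List.getLast?_cons_cons, List.getLast?_singleton, Option.some_inj] at hlast
    subst hlast
    exact hnanc (hia.tail hab)
  | cons c l ih =>
    intro a b hia hab hch hlast
    change List.IsChain _ (a :: b :: c :: l) at hch
    rw [List.isChain_cons_cons] at hch
    have hbc : H.Adj b c := (List.isChain_cons_cons.mp hch.2).1
    by_cases hcb : H.dir c b
    · refine ⟨a, b, c, ⟨[], l, by simp⟩, ⟨Or.inl hab, Or.inl hcb⟩, ?_⟩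
      intro d hbd hdi
      exact hac i (((Relation.TransGen.tail' hia hab).trans_left hbd).tail hdi)
    · have hbc' : H.dir b c := by
        rcases hbc with h | h | h | h
        · exact h
        · exact absurd h hcb
        · exact absurd h (hb _ _)
        · exact absurd h (hu _ _)
      obtain ⟨x, y, z, hinf, hcol, hbl⟩ :=
        ih b c (hia.tail hab) hbc' hch.2 (by simpa using hlast)
      exact ⟨x, y, z, hinf.trans (List.suffix_cons a _).isInfix, hcol, hbl⟩

end MixedGraph

namespace MixedGraph

variable {V : Type u}

/-- The parents of `i` m-separate `i` from any non-adjacent non-descendant `j`. -/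
lemma msep_pa (H : MixedGraph V)
    (hb : ∀ a b, ¬ H.bidir a b) (hu : ∀ a b, ¬ H.undir a b)
    (hac : ∀ v, ¬ Relation.TransGen H.dir v v)
    {i j : V} (hnadj : ¬ H.Adj i j) (hnanc : ¬ H.Anc i j) :
    H.MSep i j {u | H.dir u i} := by
  intro π hπ
  obtain ⟨hnd, hch, hhd, hlt⟩ := hπ
  match π, hhd with
  | [x], hhd =>
    simp only [List.head?_cons, Option.some_inj] at hhd
    simp only [List.getLast?_singleton, Option.some_inj] at hlt
    exact absurd (hlt ▸ hhd ▸ Relation.ReflTransGen.refl) hnanc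
  | [x, y], hhd =>
    simp only [List.head?_cons, Option.some_inj] at hhd
    simp only [List.getLast?_cons_cons, List.getLast?_singleton, Option.some_inj] at hlt
    subst hhd; subst hlt
    exact absurd (List.isChain_cons_cons.mp hch).1 hnadj
  | x :: y :: z :: l, hhd =>
    simp only [List.head?_cons, Option.some_inj] at hhd
    subst hhd
    have hxy : H.Adj x y := (List.isChain_cons_cons.mp hch).1
    by_cases hyx : H.dir y x
    · -- y is a parent of i and a non-collider on (x,y,z)
      refine ⟨x, y, z, ⟨[], l, by simp⟩, Or.inl ⟨?_, hyx⟩⟩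
      rintro ⟨hin, -⟩
      rcases hin with h | h
      · exact hac x (Relation.TransGen.head h (Relation.TransGen.single hyx))
      · exact hb _ _ h
    · have hxy' : H.dir x y := by
        rcases hxy with h | h | h | h
        · exact h
        · exact absurd h hyx
        · exact absurd h (hb _ _)
        · exact absurd h (hu _ _)
      obtain ⟨a, b, c, hinf, hcol, hbl⟩ :=
        H.find_collider hb hu hac hnanc (z :: l) x y Relation.ReflTransGen.refl hxy' hch hlt
      exact ⟨a, b, c, hinf, Or.inr ⟨hcol, fun d hd hdS => hbl d hd hdS⟩⟩

/-- Path surgery: if `u ≠ i` lies on a short `i`-`j` path and is adjacent to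
`i`, then there is a short `i`-`j` path whose second vertex is `u`. -/
lemma surgery (G : MixedGraph V) {γ : ℕ} {i j u : V} (hadj : G.Adj i u) (hui : u ≠ i)
    {π : List V} (hπ : G.IsPathBetween i j π) (hlen : π.length ≤ γ + 1) (hu : u ∈ π) :
    ∃ τ, (G.IsPathBetween i j τ ∧ τ.length ≤ γ + 1) ∧ τ.tail.head? = some u := by
  obtain ⟨hnd, hch, hhd, hlt⟩ := hπ
  match π, hhd with
  | x :: t, hhd =>
  simp only [List.head?_cons, Option.some_inj] at hhd
  subst hhd
  have hut : u ∈ t := by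
    rcases List.mem_cons.mp hu with h | h
    · exact absurd h hui
    · exact h
  obtain ⟨pre, suf, rfl⟩ := List.append_of_mem hut
  have hpre : x ∉ pre ++ u :: suf ∧ (pre ++ u :: suf).Nodup := List.nodup_cons.mp hnd
  refine ⟨x :: u :: suf, ⟨⟨?_, ?_, rfl, ?_⟩, ?_⟩, rfl⟩
  · refine List.nodup_cons.mpr ⟨?_, ?_⟩
    · intro hmem
      exact hpre.1 (List.mem_append.mpr (Or.inr hmem))
    · exact hpre.2.sublist (List.sublist_append_right pre _)
  · refine List.isChain_cons_cons.mpr ⟨hadj, ?_⟩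
    exact hch.suffix ⟨x :: pre, by simp⟩
  · rw [List.getLast?_cons_cons]
    rw [show x :: (pre ++ u :: suf) = (x :: pre) ++ u :: suf by simp,
      List.getLast?_append_of_ne_nil _ (by simp)] at hlt
    exact hlt
  · simp only [List.length_cons, List.length_append, List.length_cons] at hlen ⊢
    omega

end MixedGraph

/-- Counting lemma: an injection of `A` into a set of short lists via the
second element bounds the cardinality of `A`. -/
lemma ncard_le_of_snd {V : Type u} [Fintype V] (P : Set (List V)) (A : Set V) (η γ : ℕ)
    (hP : P ⊆ {l : List V | l.length ≤ γ + 1}) (hPcard : P.ncard ≤ η)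
    (h : ∀ u ∈ A, ∃ τ ∈ P, τ.tail.head? = some u) : A.ncard ≤ η := by
  classical
  have hPfin : P.Finite := (List.finite_length_le V (γ + 1)).subset hP
  choose! f hf1 hf2 using h
  have : A.ncard ≤ P.ncard := by
    refine Set.ncard_le_ncard_of_injOn f (fun u hu => hf1 u hu) ?_ hPfin
    intro u hu u' hu' he
    have h1 := hf2 u hu
    have h2 := hf2 u' hu'
    rw [he, h2] at h1
    exact (Option.some_inj.mp h1).symm
  exact this.trans hPcard


/-- For a DAG whose skeleton satisfies the (η,γ)-local path property,
every non-adjacent pair admits a γ-local-graph separator of size at most η. -/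
theorem stmt2 {V : Type u} [Fintype V] (E : V → V → Prop) (hacyc : Acyclic E)
    (η γ : ℕ) (hlp : (MixedGraph.ofDir E).LocalPathProp η γ)
    (i j : V) (hij : i ≠ j) (hadj : ¬ (MixedGraph.ofDir E).Adj i j) :
    ∃ S : Set V, (MixedGraph.ofDir E).IsLocalSep γ i j S ∧ S.ncard ≤ η := by
  classical
  set G := MixedGraph.ofDir E with hG
  set H := G.localGraph γ i j with hH
  have hdirE : ∀ a b, H.dir a b → E a b := fun a b h => h.2.2
  have hb : ∀ a b, ¬ H.bidir a b := fun a b h => h.2.2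
  have hu : ∀ a b, ¬ H.undir a b := fun a b h => h.2.2
  have hmem : ∀ a b, H.dir a b → a ∈ G.Vγ γ i j ∧ b ∈ G.Vγ γ i j :=
    fun a b h => ⟨h.1, h.2.1⟩
  have hac : ∀ v, ¬ Relation.TransGen H.dir v v :=
    fun v hv => hacyc v (Relation.TransGen.mono hdirE _ _ hv)
  have hadjE : ¬ (E i j ∨ E j i) := by
    intro h
    rcases h with h | h
    · exact hadj (Or.inl h)
    · exact hadj (Or.inr (Or.inl h))
  have hnadjH : ¬ H.Adj i j := by
    rintro (h | h | h | h)
    · exact hadjE (Or.inl h.2.2)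
    · exact hadjE (Or.inr h.2.2)
    · exact h.2.2
    · exact h.2.2
  have hnadjH' : ¬ H.Adj j i := by
    rintro (h | h | h | h)
    · exact hadjE (Or.inr h.2.2)
    · exact hadjE (Or.inl h.2.2)
    · exact h.2.2
    · exact h.2.2
  have hGadj : ¬ G.Adj j i := by
    rintro (h | h | h | h)
    · exact hadjE (Or.inr h)
    · exact hadjE (Or.inl h)
    · exact h
    · exact h
  have hancs : ¬ H.Anc i j ∨ ¬ H.Anc j i := by
    by_contra hcon
    push_neg at hcon
    rcases Relation.reflTransGen_iff_eq_or_transGen.mp hcon.1 with rfl | h1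
    · exact hij rfl
    rcases Relation.reflTransGen_iff_eq_or_transGen.mp hcon.2 with rfl | h2
    · exact hij rfl
    exact hac i (h1.trans h2)
  rcases hancs with hnanc | hnanc
  · -- use parents of i
    refine ⟨{u | H.dir u i}, ⟨?_, H.msep_pa hb hu hac hnadjH hnanc⟩, ?_⟩
    · intro u hdir
      have hui : u ≠ i := by
        rintro rfl
        exact hacyc u (Relation.TransGen.single (hdirE _ _ hdir))
      have huj : u ≠ j := by
        rintro rfl
        exact hadjE (Or.inr (hdirE _ _ hdir))
      exact ⟨(hmem _ _ hdir).1, by simp [hui, huj]⟩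
    · refine ncard_le_of_snd {π : List V | G.IsPathBetween i j π ∧ π.length ≤ γ + 1} _ η γ
        (fun π hπ => hπ.2) (hlp i j hij hadj) ?_
      intro u hdir
      obtain ⟨π, hπ, hlen, humem⟩ := (hmem _ _ hdir).1
      have hui : u ≠ i := by
        rintro rfl
        exact hacyc u (Relation.TransGen.single (hdirE _ _ hdir))
      exact G.surgery (Or.inr (Or.inl (hdirE _ _ hdir))) hui hπ hlen humem
  · -- use parents of j
    refine ⟨{u | H.dir u j}, ⟨?_, H.msep_symm (H.msep_pa hb hu hac hnadjH' hnanc)⟩, ?_⟩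
    · intro u hdir
      have huj : u ≠ j := by
        rintro rfl
        exact hacyc u (Relation.TransGen.single (hdirE _ _ hdir))
      have hui : u ≠ i := by
        rintro rfl
        exact hadjE (Or.inl (hdirE _ _ hdir))
      exact ⟨(hmem _ _ hdir).1, by simp [hui, huj]⟩
    · refine ncard_le_of_snd {π : List V | G.IsPathBetween j i π ∧ π.length ≤ γ + 1} _ η γ
        (fun π hπ => hπ.2) (hlp j i hij.symm hGadj) ?_
      intro u hdir
      obtain ⟨π, hπ, hlen, humem⟩ := (hmem _ _ hdir).1
      have huj : u ≠ j := by
        rintro rfl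
        exact hacyc u (Relation.TransGen.single (hdirE _ _ hdir))
      exact G.surgery (Or.inr (Or.inl (hdirE _ _ hdir))) huj
        (G.isPathBetween_reverse hπ) (by simpa using hlen) (by simpa using humem)
end

section
/- Let G be a DAG and i,j two non-adjacent vertices with i not an ancestor of j. Then the set pa(G_γ(i,j), i) of parents of i within the γ-local graph d-separates i and j in G_γ(i,j). -/
universe u

/-- In a DAG, for non-adjacent i,j with i not an ancestor of j, the
parents of i in the γ-local graph d-separate i and j in the γ-local graph. -/
theorem stmt3 {V : Type u} (E : V → V → Prop) (hacyc : Acyclic E) (γ : ℕ)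
    (i j : V) (hij : i ≠ j) (hadj : ¬ (MixedGraph.ofDir E).Adj i j)
    (hanc : ¬ (MixedGraph.ofDir E).Anc i j) :
    ((MixedGraph.ofDir E).localGraph γ i j).MSep i j
      (((MixedGraph.ofDir E).localGraph γ i j).pa i) := by
  set L := (MixedGraph.ofDir E).localGraph γ i j with hL
  have hdirE : ∀ a b, L.dir a b → E a b := fun a b h => h.2.2
  have hadjL : ∀ a b, L.Adj a b → L.dir a b ∨ L.dir b a := by
    intro a b h
    rcases h with h|h|h|h
    · exact Or.inl h
    · exact Or.inr h
    · exact absurd h.2.2 (fun h => h)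
    · exact absurd h.2.2 (fun h => h)
  have hAncE : ∀ a b, L.Anc a b → Relation.ReflTransGen E a b :=
    fun a b h => Relation.ReflTransGen.mono (fun x y hxy => hdirE x y hxy) a b h
  have aux : ∀ rest (a b : V), Relation.ReflTransGen E i a → L.dir a b →
      List.Chain' L.Adj (a :: b :: rest) → (a :: b :: rest).getLast? = some j →
      ∃ x y z, [x,y,z] <:+: (a :: b :: rest) ∧ L.Collider x y z ∧
        ∀ d, L.Anc y d → d ∉ L.pa i := by
    intro rest
    induction rest with
    | nil =>
      intro a b hia hab _ hlast
      have hb : b = j := by simpa using hlast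
      subst hb
      exact absurd (hia.trans (Relation.ReflTransGen.single (hdirE _ _ hab))) hanc
    | cons c rest' ih =>
      intro a b hia hab hchain hlast
      have hbc : L.Adj b c := (List.isChain_cons_cons.mp hchain.tail).1
      rcases hadjL _ _ hbc with h1 | h1
      · obtain ⟨x,y,z,hinf,hcol,hd⟩ := ih b c
          (hia.trans (Relation.ReflTransGen.single (hdirE _ _ hab))) h1 hchain.tail
          (by simpa using hlast)
        refine ⟨x,y,z, ?_, hcol, hd⟩
        obtain ⟨s, t, hst⟩ := hinf
        exact ⟨a :: s, t, by simp [← hst]⟩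
      · refine ⟨a, b, c, ⟨[], rest', rfl⟩, ⟨Or.inl hab, Or.inl h1⟩, ?_⟩
        intro d hbd hdS
        have hcyc : Relation.TransGen E i i :=
          Relation.TransGen.tail'
            (((hia.trans (Relation.ReflTransGen.single (hdirE _ _ hab))).trans
              (hAncE _ _ hbd))) (hdirE _ _ hdS)
        exact hacyc i hcyc
  intro π hπ
  obtain ⟨hnd, hchain, hhead, hlast⟩ := hπ
  rcases π with _ | ⟨x, _ | ⟨y, _ | ⟨z, rest⟩⟩⟩
  · simp at hhead
  ·
    exfalso
    apply hij
    have h1 : x = i := by simpa using hhead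
    have h2 : x = j := by simpa using hlast
    rw [← h1, ← h2]
  ·
    exfalso
    have h1 : i = x := by simpa using hhead.symm
    have h2 : j = y := by simpa using hlast.symm
    subst h1; subst h2
    have hadj2 : L.Adj i j := (List.isChain_cons_cons.mp hchain).1
    rcases hadjL _ _ hadj2 with h | h
    · exact hadj (Or.inl (hdirE _ _ h))
    · exact hadj (Or.inr (Or.inl (hdirE _ _ h)))
  ·
    have h1 : i = x := by simpa using hhead.symm
    subst h1
    have hiy : L.Adj i y := (List.isChain_cons_cons.mp hchain).1
    rcases hadjL _ _ hiy with h | h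
    · obtain ⟨a,b,c,hinf,hcol,hd⟩ := aux (z :: rest) i y
        Relation.ReflTransGen.refl h hchain hlast
      exact ⟨a, b, c, hinf, Or.inr ⟨hcol, hd⟩⟩
    · refine ⟨i, y, z, ⟨[], rest, rfl⟩, Or.inl ⟨?_, h⟩⟩
      rintro ⟨hcol1, -⟩
      rcases hcol1 with h2 | h2
      · exact hacyc i (Relation.TransGen.head (hdirE _ _ h2)
          (Relation.TransGen.single (hdirE _ _ h)))
      · exact h2.2.2
end

section
/- In a DAG G, if i and j are non-adjacent and i is not an ancestor of j, then the parent set pa(G,i) d-separates i and j in G. -/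
universe u

private lemma stmt12_aux {V : Type u} (E : V → V → Prop) (hacyc : Acyclic E)
    (i j : V) (hanc : ¬ (MixedGraph.ofDir E).Anc i j) :
    ∀ (l : List V) (p u : V), E p u → Relation.TransGen E i u →
      (p :: u :: l).Chain' (MixedGraph.ofDir E).Adj →
      (p :: u :: l).getLast? = some j →
      ∃ a b c, [a, b, c] <:+: (p :: u :: l) ∧ (MixedGraph.ofDir E).Collider a b c ∧
        ∀ d, (MixedGraph.ofDir E).Anc b d → d ∉ (MixedGraph.ofDir E).pa i := by
  intro l
  induction l with
  | nil =>
    intro p u hpu hiu _ hlast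
    simp [List.getLast?] at hlast
    subst hlast
    exact absurd hiu.to_reflTransGen hanc
  | cons v l' ih =>
    intro p u hpu hiu hchain hlast
    unfold List.Chain' at hchain; rw [List.isChain_cons_cons] at hchain
    obtain ⟨hadj1, hchain⟩ := hchain
    rw [List.isChain_cons_cons] at hchain
    obtain ⟨hadj2, hchain'⟩ := hchain
    by_cases huv : E u v
    · obtain ⟨a, b, c, hinf, hcol, hd⟩ := ih u v huv (hiu.tail huv) (List.isChain_cons_cons.mpr ⟨hadj2, hchain'⟩)
        (by simpa using hlast)
      exact ⟨a, b, c, hinf.trans (List.suffix_cons p _).isInfix, hcol, hd⟩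
    · have hvu : E v u := by
        rcases hadj2 with h | h | h | h
        · exact absurd h huv
        · exact h
        · exact h.elim
        · exact h.elim
      refine ⟨p, u, v, ⟨[], l', by simp⟩, ⟨Or.inl hpu, Or.inl hvu⟩, ?_⟩
      intro d hud hdi
      exact hacyc i ((hiu.trans_left hud).tail hdi)

/-- In a DAG, if i and j are non-adjacent and i is not an ancestor
of j, then the parent set of i d-separates i and j. -/
theorem stmt12 {V : Type u} (E : V → V → Prop) (hacyc : Acyclic E)
    (i j : V) (hij : i ≠ j) (hadj : ¬ (MixedGraph.ofDir E).Adj i j)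
    (hanc : ¬ (MixedGraph.ofDir E).Anc i j) :
    (MixedGraph.ofDir E).MSep i j ((MixedGraph.ofDir E).pa i) := by
  intro π hπ
  rcases hπ with ⟨hnd, hchain, hhead, hlast⟩
  obtain ⟨rest, rfl⟩ : ∃ rest, π = i :: rest := by
    cases π with
    | nil => simp at hhead
    | cons x r => simp at hhead; exact ⟨r, by rw [hhead]⟩
  obtain ⟨w, rest', rfl⟩ : ∃ w rest', rest = w :: rest' := by
    cases rest with
    | nil => simp [List.getLast?] at hlast; exact absurd hlast hij
    | cons w r => exact ⟨w, r, rfl⟩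
  simp only [List.Chain', List.isChain_cons_cons] at hchain
  obtain ⟨hadj1, hchain⟩ := hchain
  by_cases hwi : E w i
  · obtain ⟨v, rest'', rfl⟩ : ∃ v rest'', rest' = v :: rest'' := by
      cases rest' with
      | nil =>
        simp [List.getLast?] at hlast; subst hlast
        exact absurd hadj1 hadj
      | cons v r => exact ⟨v, r, rfl⟩
    refine ⟨i, w, v, ⟨[], rest'', by simp⟩, Or.inl ⟨?_, hwi⟩⟩
    rintro ⟨h1 | h1, _⟩
    · exact hacyc i (Relation.TransGen.head h1 (Relation.TransGen.single hwi))
    · exact h1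
  · have hiw : E i w := by
      rcases hadj1 with h | h | h | h
      · exact h
      · exact absurd h hwi
      · exact h.elim
      · exact h.elim
    obtain ⟨a, b, c, hinf, hcol, hd⟩ := stmt12_aux E hacyc i j hanc rest' i w hiw
      (Relation.TransGen.single hiw) (List.isChain_cons_cons.mpr ⟨hadj1, hchain⟩) hlast
    exact ⟨a, b, c, hinf, Or.inr ⟨hcol, hd⟩⟩
end
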